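/- Let q be an odd prime power and k ∈ F_q a nonzero square. Then the product of all a ∈ F_q^× with a+k a nonzero square equals (-1)^((q-1)/2)/(2k), and the product of all a ∈ F_q^× with a+k a nonsquare equals (-1)^((q-1)/2) · 2. -/

import Mathlib

open scoped Classical

open Polynomial Finset in
private lemma aux_card_ns {F : Type*} [Field F] [Fintype F]
    (hchar : ringChar F ≠ 2) :
    (Finset.univ.filter (fun t : F => t ^ (Fintype.card F / 2) = -1)).card
      = Fintype.card F / 2 := by
  classical
  set m := Fintype.card F / 2 with hmdef
  have hodd : Fintype.card F % 2 = 1 := FiniteField.odd_card_of_char_ne_two hchar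
  have hcard2 : 2 ≤ Fintype.card F := Fintype.one_lt_card
  have hm0 : 0 < m := by omega
  have hne : (-1 : F) ≠ 1 := Ring.neg_one_ne_one_of_char_ne_two hchar
  have hcardle : ∀ c : F, (Finset.univ.filter (fun t : F => t ^ m = c)).card ≤ m := by
    intro c
    have hsub : (Finset.univ.filter (fun t : F => t ^ m = c)).val
        ≤ (X ^ m - C c).roots := by
      refine (Multiset.le_iff_subset (Finset.univ.filter _).nodup).2 ?_
      intro t ht
      rw [Finset.mem_val, Finset.mem_filter] at ht
      rw [mem_roots ((monic_X_pow_sub_C c hm0.ne').ne_zero)]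
      simp [IsRoot, ht.2]
    have h1 := Multiset.card_le_card hsub
    have h2 := (X ^ m - C c).card_roots'
    rw [natDegree_X_pow_sub_C] at h2
    exact le_trans h1 h2
  set SQ := Finset.univ.filter (fun t : F => t ^ m = 1) with hSQ
  set NS := Finset.univ.filter (fun t : F => t ^ m = -1) with hNS
  have hdisj : Disjoint SQ NS := by
    rw [Finset.disjoint_left]
    intro t h1 h2
    rw [hSQ, Finset.mem_filter] at h1
    rw [hNS, Finset.mem_filter] at h2
    exact hne (h2.2.symm.trans h1.2)
  have hcup : SQ ∪ NS = Finset.univ.filter (fun t : F => t ≠ 0) := by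
    ext t
    simp only [hSQ, hNS, Finset.mem_union, Finset.mem_filter, Finset.mem_univ, true_and]
    constructor
    · rintro (h | h) rfl
      · rw [zero_pow hm0.ne'] at h; exact one_ne_zero h.symm
      · rw [zero_pow hm0.ne'] at h; exact neg_ne_zero.2 one_ne_zero h.symm
    · intro ht
      exact FiniteField.pow_dichotomy hchar ht
  have hsum : SQ.card + NS.card = Fintype.card F - 1 := by
    rw [← Finset.card_union_of_disjoint hdisj, hcup, Finset.filter_ne' Finset.univ (0 : F),
      Finset.card_erase_of_mem (Finset.mem_univ _), Finset.card_univ]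
  have h1 := hcardle (1 : F)
  have h2 := hcardle (-1 : F)
  rw [← hSQ] at h1
  rw [← hNS] at h2
  omega

open Polynomial Finset in
private lemma aux_prod_one_sub_ns {F : Type*} [Field F] [Fintype F]
    (hchar : ringChar F ≠ 2) :
    (∏ t ∈ Finset.univ.filter (fun t : F => t ^ (Fintype.card F / 2) = -1), (1 - t)) = 2 := by
  classical
  set m := Fintype.card F / 2 with hmdef
  have hodd : Fintype.card F % 2 = 1 := FiniteField.odd_card_of_char_ne_two hchar
  have hcard2 : 2 ≤ Fintype.card F := Fintype.one_lt_card
  have hm0 : 0 < m := by omega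
  set NS := Finset.univ.filter (fun t : F => t ^ m = -1) with hNS
  have hNScard : NS.card = m := aux_card_ns hchar
  have hsub : NS.val ≤ (X ^ m - C (-1 : F)).roots := by
    refine (Multiset.le_iff_subset NS.nodup).2 ?_
    intro t ht
    rw [Finset.mem_val, hNS, Finset.mem_filter] at ht
    rw [mem_roots ((monic_X_pow_sub_C (-1 : F) hm0.ne').ne_zero)]
    simp [IsRoot, ht.2]
  have hroots : (X ^ m - C (-1 : F)).roots = NS.val := by
    refine (Multiset.eq_of_le_of_card_le hsub ?_).symm
    have h2 := (X ^ m - C (-1 : F)).card_roots'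
    rw [natDegree_X_pow_sub_C] at h2
    exact h2.trans_eq hNScard.symm
  have hmonic : (X ^ m - C (-1 : F)).Monic := monic_X_pow_sub_C _ hm0.ne'
  have hfact := Polynomial.C_leadingCoeff_mul_prod_multiset_X_sub_C
    (p := X ^ m - C (-1 : F))
    (by rw [hroots, natDegree_X_pow_sub_C]; exact hNScard)
  rw [hmonic.leadingCoeff, map_one, one_mul, hroots] at hfact
  have heval := congrArg (Polynomial.eval 1) hfact
  rw [eval_multiset_prod, Multiset.map_map] at heval
  simp only [Function.comp, eval_sub, eval_X, eval_C, eval_pow, one_pow,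
    sub_neg_eq_add] at heval
  rw [Finset.prod_eq_multiset_prod, heval]
  norm_num

/-- For `k` a nonzero square in `F_q`: products over `a` with `a+k` a nonzero square,
resp. a nonsquare. -/
theorem prod_Sk_square (F : Type*) [Field F] [Fintype F] (q : ℕ)
    (hq : Fintype.card F = q) (hodd : Odd q) (k : F) (hk0 : k ≠ 0) (hk : IsSquare k) :
    (∏ a ∈ Finset.univ.filter (fun a : F => a ≠ 0 ∧ a + k ≠ 0 ∧ IsSquare (a + k)), a)
      = (-1 : F) ^ ((q - 1) / 2) / (2 * k) ∧
    (∏ a ∈ Finset.univ.filter (fun a : F => a ≠ 0 ∧ a + k ≠ 0 ∧ ¬ IsSquare (a + k)), a)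
      = (-1 : F) ^ ((q - 1) / 2) * 2 := by
  classical
  have hqmod : q % 2 = 1 := Nat.odd_iff.mp hodd
  have hchar : ringChar F ≠ 2 := by
    intro h
    have := FiniteField.even_card_of_char_two h
    rw [hq] at this; omega
  have hcard2 : 2 ≤ Fintype.card F := Fintype.one_lt_card
  set m := (q - 1) / 2 with hmdef
  have hmcard : Fintype.card F / 2 = m := by rw [hq]; omega
  have hm0 : 0 < m := by rw [hq] at hcard2; omega
  have hne : (-1 : F) ≠ 1 := Ring.neg_one_ne_one_of_char_ne_two hchar
  have h2ne : (2 : F) ≠ 0 := Ring.two_ne_zero hchar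
  have hns_iff : ∀ t : F, (t ≠ 0 ∧ ¬ IsSquare t) ↔ t ^ m = -1 := by
    intro t
    constructor
    · rintro ⟨ht0, hts⟩
      rcases FiniteField.pow_dichotomy hchar ht0 with h | h
      · exact absurd ((FiniteField.isSquare_iff hchar ht0).2 h) hts
      · rwa [hmcard] at h
    · intro h
      have ht0 : t ≠ 0 := by
        rintro rfl
        rw [zero_pow hm0.ne'] at h
        exact neg_ne_zero.2 one_ne_zero h.symm
      refine ⟨ht0, fun hsq => ?_⟩
      have := (FiniteField.isSquare_iff hchar ht0).1 hsq
      rw [hmcard, h] at this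
      exact hne this
  have hkm : k ^ m = 1 := by
    have := (FiniteField.isSquare_iff hchar hk0).1 hk
    rwa [hmcard] at this
  have key : (∏ t ∈ Finset.univ.filter (fun t : F => t ^ m = -1), (1 - t)) = 2 := by
    have := aux_prod_one_sub_ns hchar
    rwa [hmcard] at this
  set NS := Finset.univ.filter (fun t : F => t ^ m = -1) with hNSdef
  have hNScard : NS.card = m := by
    have := aux_card_ns hchar
    rwa [hmcard] at this
  have hPN : (∏ a ∈ Finset.univ.filter
      (fun a : F => a ≠ 0 ∧ a + k ≠ 0 ∧ ¬ IsSquare (a + k)), a)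
      = (-1 : F) ^ m * 2 := by
    have hbij : (∏ a ∈ Finset.univ.filter
        (fun a : F => a ≠ 0 ∧ a + k ≠ 0 ∧ ¬ IsSquare (a + k)), a)
        = ∏ t ∈ NS, (k * t - k) := by
      refine Finset.prod_nbij' (fun a => (a + k) * k⁻¹) (fun t => k * t - k) ?_ ?_ ?_ ?_ ?_
      · intro a ha
        rw [Finset.mem_filter] at ha
        obtain ⟨-, ha0, hak0, hakns⟩ := ha
        rw [hNSdef, Finset.mem_filter]
        refine ⟨Finset.mem_univ _, ?_⟩
        have h1 : (a + k) ^ m = -1 := (hns_iff _).1 ⟨hak0, hakns⟩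
        rw [mul_pow, h1, inv_pow, hkm, inv_one, mul_one]
      · intro t ht
        rw [hNSdef, Finset.mem_filter] at ht
        have htm : t ^ m = -1 := ht.2
        obtain ⟨ht0, htns⟩ := (hns_iff t).2 htm
        rw [Finset.mem_filter]
        refine ⟨Finset.mem_univ _, ?_, ?_, ?_⟩
        · intro h
          have ht1 : t = 1 := by
            have : k * (t - 1) = 0 := by ring_nf; linear_combination h
            rcases mul_eq_zero.1 this with h' | h'
            · exact absurd h' hk0
            · exact sub_eq_zero.1 h'
          rw [ht1, one_pow] at htm
          exact hne htm.symm
        · rw [sub_add_cancel]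
          exact mul_ne_zero hk0 ht0
        · rw [sub_add_cancel]
          intro hsq
          have hkt0 : k * t ≠ 0 := mul_ne_zero hk0 ht0
          have := (FiniteField.isSquare_iff hchar hkt0).1 hsq
          rw [hmcard, mul_pow, hkm, one_mul, htm] at this
          exact hne this
      · intro a ha
        field_simp
        ring
      · intro t ht
        field_simp
        ring
      · intro a ha
        field_simp
        ring
    rw [hbij]
    have hrw : ∀ t ∈ NS, k * t - k = (-k) * (1 - t) := by intro t _; ring
    rw [Finset.prod_congr rfl hrw, Finset.prod_mul_distrib, Finset.prod_const, key, hNScard,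
      neg_pow, hkm, mul_one]
  refine ⟨?_, hPN⟩
  -- Wilson: product over all nonzero elements is -1
  have hwilson : (∏ a ∈ Finset.univ.filter (fun a : F => a ≠ 0), a) = -1 := by
    have h : ((∏ x : Fˣ, x : Fˣ) : F) = -1 := by
      rw [FiniteField.prod_univ_units_id_eq_neg_one]; simp
    have hcoe : ((∏ x : Fˣ, x : Fˣ) : F) = ∏ x : Fˣ, (x : F) :=
      map_prod (Units.coeHom F) _ _
    rw [hcoe] at h
    rw [← h]
    refine (Finset.prod_bij (fun (x : Fˣ) _ => (x : F)) ?_ ?_ ?_ ?_).symm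
    · intro x _
      exact Finset.mem_filter.2 ⟨Finset.mem_univ _, x.ne_zero⟩
    · intro x _ y _ hxy
      exact Units.ext hxy
    · intro a ha
      have ha0 : a ≠ 0 := (Finset.mem_filter.1 ha).2
      exact ⟨Units.mk0 a ha0, Finset.mem_univ _, rfl⟩
    · intro x _
      rfl
  -- partition the nonzero elements
  have hsplit : (∏ a ∈ Finset.univ.filter (fun a : F => a ≠ 0), a)
      = (-k) *
        ((∏ a ∈ Finset.univ.filter (fun a : F => a ≠ 0 ∧ a + k ≠ 0 ∧ IsSquare (a + k)), a) *
         (∏ a ∈ Finset.univ.filter (fun a : F => a ≠ 0 ∧ a + k ≠ 0 ∧ ¬ IsSquare (a + k)), a)) := by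
    rw [← Finset.prod_filter_mul_prod_filter_not
      (Finset.univ.filter (fun a : F => a ≠ 0)) (fun a => a + k = 0) (fun a => a)]
    have e1 : (Finset.univ.filter (fun a : F => a ≠ 0)).filter (fun a => a + k = 0)
        = {-k} := by
      ext a
      simp only [Finset.mem_filter, Finset.mem_univ, true_and, Finset.mem_singleton]
      constructor
      · rintro ⟨-, h⟩; exact eq_neg_of_add_eq_zero_left h
      · rintro rfl
        constructor
        · exact neg_ne_zero.2 hk0
        · ring
    rw [← Finset.prod_filter_mul_prod_filter_not
      ((Finset.univ.filter (fun a : F => a ≠ 0)).filter (fun a => ¬ a + k = 0))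
      (fun a => IsSquare (a + k)) (fun a => a)]
    have e2 : ((Finset.univ.filter (fun a : F => a ≠ 0)).filter
          (fun a => ¬ a + k = 0)).filter (fun a => IsSquare (a + k))
        = Finset.univ.filter (fun a : F => a ≠ 0 ∧ a + k ≠ 0 ∧ IsSquare (a + k)) := by
      ext a
      simp only [Finset.mem_filter, Finset.mem_univ, true_and]
      tauto
    have e3 : ((Finset.univ.filter (fun a : F => a ≠ 0)).filter
          (fun a => ¬ a + k = 0)).filter (fun a => ¬ IsSquare (a + k))
        = Finset.univ.filter (fun a : F => a ≠ 0 ∧ a + k ≠ 0 ∧ ¬ IsSquare (a + k)) := by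
      ext a
      simp only [Finset.mem_filter, Finset.mem_univ, true_and]
      tauto
    rw [e1, e2, e3, Finset.prod_singleton]
  rw [hwilson, hPN] at hsplit
  rw [eq_div_iff (mul_ne_zero h2ne hk0)]
  set PS := (∏ a ∈ Finset.univ.filter
    (fun a : F => a ≠ 0 ∧ a + k ≠ 0 ∧ IsSquare (a + k)), a) with hPS
  set e := (-1 : F) ^ m with he
  have hpow : e * e = 1 := by rw [he, ← mul_pow]; norm_num
  linear_combination e * hsplit + (-(2 * k * PS)) * hpow
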